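/- Euclid Book 1, Proposition 16 (exterior angle theorem): in a nondegenerate triangle ABC in the plane, if D is a point such that B lies strictly between C and D, then the exterior angle ∠ABD is greater than each of the interior angles ∠BAC and ∠BCA. -/

import Mathlib

open EuclideanGeometry

theorem stmt_9 (A B C D : EuclideanSpace ℝ (Fin 2))
    (h : ¬ Collinear ℝ ({A, B, C} : Set (EuclideanSpace ℝ (Fin 2))))
    (hD : Sbtw ℝ C B D) :
    ∠ A B D > ∠ B A C ∧ ∠ A B D > ∠ B C A := by
  have hBA : B ≠ A := fun he => h (by rw [he]; simpa using collinear_pair ℝ A C)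
  have hCA : C ≠ A := fun he => h (by rw [he]; simpa [Set.insert_comm, Set.pair_comm] using collinear_pair ℝ A B)
  have hpi : ∠ C B D = Real.pi := hD.angle₁₂₃_eq_pi
  have hsum : ∠ A B C + ∠ A B D = Real.pi :=
    EuclideanGeometry.angle_add_angle_eq_pi_of_angle_eq_pi A hpi
  have htri : ∠ A B C + ∠ B C A + ∠ C A B = Real.pi :=
    EuclideanGeometry.angle_add_angle_add_angle_eq_pi C hBA
  have h1 : ¬ Collinear ℝ ({B, C, A} : Set (EuclideanSpace ℝ (Fin 2))) := by
    intro hc; exact h (hc.subset (by intro x hx; simp at hx ⊢; tauto))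
  have h2 : ¬ Collinear ℝ ({C, A, B} : Set (EuclideanSpace ℝ (Fin 2))) := by
    intro hc; exact h (hc.subset (by intro x hx; simp at hx ⊢; tauto))
  have hp1 : 0 < ∠ B C A := EuclideanGeometry.angle_pos_of_not_collinear h1
  have hp2 : 0 < ∠ C A B := EuclideanGeometry.angle_pos_of_not_collinear h2
  have heq : ∠ A B D = ∠ B C A + ∠ C A B := by linarith
  have hcomm : ∠ B A C = ∠ C A B := EuclideanGeometry.angle_comm B A C
  constructor <;> [linarith; linarith]
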